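/- arXiv:1603.01727 — 2 statements merged into one kernel-verified Lean document; each statement's English description precedes it below -/
import Mathlib

section
/- Let W be a standard one-dimensional Brownian motion, t > 0, and φ : ℝ → ℝ a bounded measurable function. Then the map x ↦ E[φ(x + W_t)] is differentiable and ∂_x E[φ(x + W_t)] = E[φ(x + W_t) · W_t / t]. -/
open MeasureTheory ProbabilityTheory Real
open scoped ENNReal NNReal

/-- First-order automatic differentiation (Malliavin weight) identity for the heat kernel:
for `W_t ~ N(0,t)` with `t > 0` and `φ` bounded measurable,
`x ↦ E[φ(x + W_t)]` is differentiable and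
`∂_x E[φ(x + W_t)] = E[φ(x + W_t) · W_t / t]`. -/
theorem stmt_1 (t : ℝ) (ht : 0 < t) (φ : ℝ → ℝ) (hφm : Measurable φ)
    (C : ℝ) (hφb : ∀ y, |φ y| ≤ C) (x : ℝ) :
    HasDerivAt (fun x' => ∫ y, φ (x' + y) ∂(gaussianReal 0 t.toNNReal))
      (∫ y, φ (x + y) * (y / t) ∂(gaussianReal 0 t.toNNReal)) x := by
  have hτ : t.toNNReal ≠ 0 := by simp [Real.toNNReal_eq_zero, not_le, ht]
  have hτc : ((t.toNNReal : ℝ)) = t := Real.coe_toNNReal _ ht.le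
  set g : ℝ → ℝ := gaussianPDFReal 0 t.toNNReal with hg
  -- step 1 : gaussian integral as Lebesgue integral
  have key : ∀ f : ℝ → ℝ, ∫ y, f y ∂(gaussianReal 0 t.toNNReal) = ∫ y, f y * g y := by
    intro f
    rw [gaussianReal_of_var_ne_zero _ hτ]
    have h0 : gaussianPDF 0 t.toNNReal = fun y => ((g y).toNNReal : ℝ≥0∞) := rfl
    rw [h0, integral_withDensity_eq_integral_smul
        ((measurable_gaussianPDFReal 0 t.toNNReal).real_toNNReal)]
    refine integral_congr_ae (Filter.Eventually.of_forall fun y => ?_)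
    simp [NNReal.smul_def, Real.coe_toNNReal _ (gaussianPDFReal_nonneg 0 t.toNNReal y), mul_comm, hg]
  -- pointwise derivative of translated density
  have hderiv : ∀ z x' : ℝ, HasDerivAt (fun x' => g (z - x'))
      (g (z - x') * ((z - x') / t)) x' := by
    intro z x'
    simp only [hg, gaussianPDFReal, sub_zero, hτc]
    have h1 : HasDerivAt (fun x' : ℝ => z - x') (-1) x' := (hasDerivAt_id x').const_sub z
    have h2 : HasDerivAt (fun x' : ℝ => -(z - x') ^ 2 / (2 * t))
        (-(2 * (z - x') ^ 1 * (-1)) / (2 * t)) x' := ((h1.pow 2).neg).div_const _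
    have h3 := (h2.exp).const_mul (√(2 * π * t))⁻¹
    convert h3 using 1
    · rfl
    · rfl
    ring
  have hC : 0 ≤ C := le_trans (abs_nonneg _) (hφb 0)
  set c : ℝ := (√(2 * π * t))⁻¹ with hc
  have hc0 : 0 ≤ c := inv_nonneg.mpr (Real.sqrt_nonneg _)
  have hgval : ∀ u : ℝ, g u = c * rexp (-u ^ 2 / (2 * t)) := by
    intro u; simp [hg, gaussianPDFReal, hτc, hc]
  set K : ℝ := C * c * rexp (1 / t) / t with hK
  set bound : ℝ → ℝ := fun z =>
    K * (|z - x| * rexp (-(1 / (4 * t)) * (z - x) ^ 2) + rexp (-(1 / (4 * t)) * (z - x) ^ 2))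
    with hbound
  -- measurability of translated density
  have hgm : ∀ x' : ℝ, Measurable fun z => g (z - x') := fun x' =>
    (measurable_gaussianPDFReal 0 t.toNNReal).comp (measurable_id.sub_const x')
  -- integrability of F x'
  have hFint : ∀ x' : ℝ, Integrable (fun z => φ z * g (z - x')) := by
    intro x'
    exact Integrable.bdd_mul ((integrable_gaussianPDFReal 0 t.toNNReal).comp_sub_right x')
      hφm.aestronglyMeasurable (Filter.Eventually.of_forall fun z => by simpa using hφb z)
  -- integrability of bound
  have hboundint : Integrable bound := by
    have hb4 : (0:ℝ) < 1 / (4 * t) := by positivity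
    have h1 : Integrable (fun w : ℝ => |w| * rexp (-(1 / (4 * t)) * w ^ 2)
        + rexp (-(1 / (4 * t)) * w ^ 2)) := by
      refine Integrable.add ?_ (integrable_exp_neg_mul_sq hb4)
      have h2 := (integrable_mul_exp_neg_mul_sq hb4).abs
      refine h2.congr (Filter.Eventually.of_forall fun w => ?_)
      simp [abs_mul, abs_of_pos (Real.exp_pos _)]
    exact ((h1.comp_sub_right x).const_mul K)
  -- the main bound
  have hbnd : ∀ z : ℝ, ∀ x' ∈ Metric.ball x 1,
      ‖φ z * (g (z - x') * ((z - x') / t))‖ ≤ bound z := by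
    intro z x' hx'
    have hd : |x' - x| < 1 := by simpa [Real.dist_eq] using hx'
    set u : ℝ := z - x' with hu
    set w : ℝ := z - x with hw
    have hdw : |u - w| ≤ 1 := by
      have he : u - w = x - x' := by rw [hu, hw]; ring
      rw [he, abs_sub_comm]; exact hd.le
    have hdwsq : (u - w) ^ 2 ≤ 1 := by
      have := abs_nonneg (u - w)
      nlinarith [sq_abs (u - w)]
    have huw : |u| ≤ |w| + 1 := by
      have h1 : |u| ≤ |w| + |u - w| := by
        calc |u| = |w + (u - w)| := by ring_nf
          _ ≤ |w| + |u - w| := abs_add_le _ _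
      linarith
    have hexp : rexp (-u ^ 2 / (2 * t)) ≤ rexp (1 / t) * rexp (-(1 / (4 * t)) * w ^ 2) := by
      rw [← Real.exp_add]
      apply Real.exp_le_exp.mpr
      have e1 : -u ^ 2 / (2 * t) = (-2 * u ^ 2) / (4 * t) := by ring
      have e2 : 1 / t + -(1 / (4 * t)) * w ^ 2 = (4 - w ^ 2) / (4 * t) := by
        field_simp; ring
      rw [e1, e2, div_le_div_iff_of_pos_right (by positivity)]
      nlinarith [sq_nonneg (w + 2 * (u - w))]
    have h5 : ‖φ z * (g u * (u / t))‖ = |φ z| * c * rexp (-u ^ 2 / (2 * t)) * |u| / t := by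
      rw [hgval u, norm_eq_abs]
      simp [abs_mul, abs_div, abs_of_pos ht, abs_of_nonneg hc0, abs_of_pos (Real.exp_pos _)]
      ring
    rw [h5]
    have hE0 : (0:ℝ) ≤ rexp (-(1 / (4 * t)) * w ^ 2) := (Real.exp_pos _).le
    calc |φ z| * c * rexp (-u ^ 2 / (2 * t)) * |u| / t
        ≤ C * c * (rexp (1 / t) * rexp (-(1 / (4 * t)) * w ^ 2)) * (|w| + 1) / t := by
          gcongr
          exact hφb z
      _ = bound z := by
          simp only [hbound, hK]
          rw [← hw]
          ring
  -- differentiate under the integral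
  have main := hasDerivAt_integral_of_dominated_loc_of_deriv_le (μ := volume)
    (F := fun x' z => φ z * g (z - x'))
    (F' := fun x' z => φ z * (g (z - x') * ((z - x') / t)))
    (bound := bound) (Metric.ball_mem_nhds x one_pos)
    (Filter.Eventually.of_forall fun x' => (hφm.mul (hgm x')).aestronglyMeasurable)
    (hFint x)
    ((hφm.mul ((hgm x).mul ((measurable_id.sub_const x).div_const t))).aestronglyMeasurable)
    (Filter.Eventually.of_forall fun z x' hx' => hbnd z x' hx')
    hboundint
    (Filter.Eventually.of_forall fun z x' _ => (hderiv z x').const_mul (φ z))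
  -- identify the function and the derivative
  have heqf : (fun x' => ∫ y, φ (x' + y) ∂(gaussianReal 0 t.toNNReal))
      = fun x' => ∫ z, φ z * g (z - x') := by
    funext x'
    rw [key (fun y => φ (x' + y)),
      ← integral_add_right_eq_self (fun z => φ z * g (z - x')) x']
    congr 1
    funext y
    simp [add_comm]
  have heqd : ∫ y, φ (x + y) * (y / t) ∂(gaussianReal 0 t.toNNReal)
      = ∫ z, φ z * (g (z - x) * ((z - x) / t)) := by
    rw [key (fun y => φ (x + y) * (y / t)),
      ← integral_add_right_eq_self (fun z => φ z * (g (z - x) * ((z - x) / t))) x]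
    congr 1
    funext y
    simp [add_comm]
    ring
  rw [heqf, heqd]
  exact main.2
end

section
/- If the lifetime distribution is Gamma(κ, θ), then the expected population size in the age-dependent branching process with mean offspring n₀ equals m(t) = Σ_{k=0}^∞ n₀^k γ(kκ, t/θ)/Γ(kκ) (with the k = 0 term equal to 1), and this series converges for every t ≥ 0 and n₀ ≥ 0. -/
open MeasureTheory Real intervalIntegral

/-- The `k`-fold convolution CDF `F^{*k}(t)` for i.i.d. lifetimes with density `ρ`,
with `F^{*0} ≡ 1`, defined by the convolution recursion. -/
noncomputable def Fstar (ρ : ℝ → ℝ) : ℕ → ℝ → ℝ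
  | 0 => fun _ => 1
  | (k + 1) => fun t => ∫ s in (0:ℝ)..t, Fstar ρ k (t - s) * ρ s

/-- The lower incomplete Gamma function `γ(a, x) = ∫_0^x s^{a−1} e^{−s} ds`. -/
noncomputable def lowerGamma (a x : ℝ) : ℝ :=
  ∫ s in Set.Ioc (0 : ℝ) x, s ^ (a - 1) * Real.exp (-s)

open Set


noncomputable def gpdf (θ a s : ℝ) : ℝ :=
  if 0 < s then s ^ (a - 1) * Real.exp (-s / θ) / (Real.Gamma a * θ ^ a) else 0

lemma gpdf_nonneg {θ a : ℝ} (hθ : 0 < θ) (ha : 0 < a) (s : ℝ) : 0 ≤ gpdf θ a s := by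
  unfold gpdf
  split_ifs with h
  · positivity
  · exact le_refl 0

lemma measurable_gpdf (θ a : ℝ) : Measurable (gpdf θ a) := by
  unfold gpdf
  apply Measurable.ite measurableSet_Ioi
  · fun_prop
  · exact measurable_const

lemma integrableOn_gpdf {θ a : ℝ} (hθ : 0 < θ) (ha : 0 < a) (u : ℝ) :
    IntegrableOn (gpdf θ a) (Ioc 0 u) := by
  rcases le_or_gt u 0 with hu | hu
  · rw [Set.Ioc_eq_empty (by exact fun h => absurd (h.trans_le hu) (lt_irrefl 0))]
    exact integrableOn_empty
  · have hbase : IntegrableOn (fun s : ℝ => s ^ (a - 1) * (Real.Gamma a * θ ^ a)⁻¹) (Ioc 0 u) := by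
      have := (intervalIntegral.intervalIntegrable_rpow' (a := 0) (b := u)
        (r := a - 1) (by linarith)).mul_const (Real.Gamma a * θ ^ a)⁻¹
      rwa [intervalIntegrable_iff_integrableOn_Ioc_of_le hu.le] at this
    refine hbase.mono' ((measurable_gpdf θ a).aestronglyMeasurable.restrict) ?_
    filter_upwards [ae_restrict_mem measurableSet_Ioc] with s hs
    have hs0 : 0 < s := hs.1
    rw [gpdf, if_pos hs0, Real.norm_eq_abs, abs_of_nonneg (by positivity)]
    rw [div_eq_mul_inv]
    have hexp : Real.exp (-s / θ) ≤ 1 := by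
      rw [Real.exp_le_one_iff]
      have : 0 < s / θ := div_pos hs0 hθ
      rw [neg_div]; linarith
    have h1 : s ^ (a - 1) * Real.exp (-s / θ) ≤ s ^ (a - 1) * 1 :=
      mul_le_mul_of_nonneg_left hexp (by positivity)
    rw [mul_one] at h1
    exact mul_le_mul_of_nonneg_right h1 (by positivity)

lemma lg_eq {θ a : ℝ} (hθ : 0 < θ) (ha : 0 < a) {u : ℝ} (hu : 0 ≤ u) :
    lowerGamma a (u / θ) / Real.Gamma a = ∫ s in Ioc (0:ℝ) u, gpdf θ a s := by
  have huθ : 0 ≤ u / θ := div_nonneg hu hθ.le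
  have key : (∫ x in (0:ℝ)..u, ((x / θ) ^ (a - 1) * Real.exp (-(x / θ))))
      = θ • ∫ s in (0:ℝ)..(u/θ), s ^ (a - 1) * Real.exp (-s) := by
    have := intervalIntegral.integral_comp_div (a := (0:ℝ)) (b := u)
      (c := θ) (f := fun s => s ^ (a - 1) * Real.exp (-s)) hθ.ne'
    rw [zero_div] at this
    exact this
  have hLG : lowerGamma a (u / θ) = θ⁻¹ * ∫ x in (0:ℝ)..u, ((x / θ) ^ (a - 1) * Real.exp (-(x / θ))) := by
    rw [key, smul_eq_mul, ← mul_assoc, inv_mul_cancel₀ hθ.ne', one_mul, lowerGamma,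
      intervalIntegral.integral_of_le huθ]
  rw [hLG, intervalIntegral.integral_of_le hu, ← MeasureTheory.integral_const_mul,
    ← MeasureTheory.integral_div]
  refine setIntegral_congr_fun measurableSet_Ioc fun x hx => ?_
  have hx0 : 0 < x := hx.1
  rw [gpdf, if_pos hx0, Real.div_rpow hx0.le hθ.le, neg_div]
  have hθa : θ ^ a = θ ^ (a - 1) * θ := by
    rw [Real.rpow_sub hθ, Real.rpow_one]
    field_simp
  rw [hθa]
  have h1 : (0:ℝ) < θ ^ (a-1) := Real.rpow_pos_of_pos hθ _
  have h2 : (0:ℝ) < Real.Gamma a := Real.Gamma_pos_of_pos ha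
  field_simp

lemma beta_real {a b x : ℝ} (ha : 0 < a) (hb : 0 < b) (hx : 0 < x) :
    ∫ s in Ioo (0:ℝ) x, s ^ (b - 1) * (x - s) ^ (a - 1)
      = x ^ (a + b - 1) * (Real.Gamma a * Real.Gamma b / Real.Gamma (a + b)) := by
  have hbeta : Complex.betaIntegral b a
      = ((Real.Gamma a * Real.Gamma b / Real.Gamma (a + b) : ℝ) : ℂ) := by
    have h := Complex.Gamma_mul_Gamma_eq_betaIntegral
      (s := (b:ℂ)) (t := (a:ℂ)) (by simpa using hb) (by simpa using ha)
    have hG : Complex.Gamma ((b:ℂ) + a) = ((Real.Gamma (a + b) : ℝ) : ℂ) := by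
      rw [← Complex.ofReal_add, Complex.Gamma_ofReal, add_comm]
    rw [Complex.Gamma_ofReal, Complex.Gamma_ofReal, hG] at h
    have hne : ((Real.Gamma (a + b) : ℝ) : ℂ) ≠ 0 := by
      simpa using (Real.Gamma_pos_of_pos (by linarith)).ne'
    rw [Complex.ofReal_div, Complex.ofReal_mul, eq_div_iff hne]
    linear_combination -h
  have hscaled := Complex.betaIntegral_scaled (b:ℂ) (a:ℂ) hx
  rw [hbeta] at hscaled
  have hL : (∫ s in (0:ℝ)..x, ((s:ℂ) ^ ((b:ℂ) - 1) * ((x:ℂ) - s) ^ ((a:ℂ) - 1)))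
      = ((∫ s in Ioo (0:ℝ) x, s ^ (b - 1) * (x - s) ^ (a - 1) : ℝ) : ℂ) := by
    rw [intervalIntegral.integral_of_le hx.le, MeasureTheory.integral_Ioc_eq_integral_Ioo,
      show ((∫ s in Ioo (0:ℝ) x, s ^ (b - 1) * (x - s) ^ (a - 1) : ℝ) : ℂ)
        = ∫ s in Ioo (0:ℝ) x, ((s ^ (b - 1) * (x - s) ^ (a - 1) : ℝ) : ℂ)
      from (_root_.integral_ofReal).symm]
    refine setIntegral_congr_fun measurableSet_Ioo fun s hs => ?_
    push_cast
    rw [Complex.ofReal_cpow hs.1.le, Complex.ofReal_cpow (by linarith [hs.2] : (0:ℝ) ≤ x - s)]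
    push_cast
    ring
  have hR : ((x:ℂ) ^ ((b:ℂ) + a - 1))
      = ((x ^ (a + b - 1) : ℝ) : ℂ) := by
    rw [Complex.ofReal_cpow hx.le]
    push_cast
    ring_nf
  rw [hL, hR, ← Complex.ofReal_mul] at hscaled
  exact_mod_cast hscaled

lemma gpdf_conv {θ a b : ℝ} (hθ : 0 < θ) (ha : 0 < a) (hb : 0 < b) {x : ℝ} (hx : 0 < x) :
    ∫ s in Ioo (0:ℝ) x, gpdf θ b s * gpdf θ a (x - s) = gpdf θ (a + b) x := by
  have hGa := Real.Gamma_pos_of_pos ha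
  have hGb := Real.Gamma_pos_of_pos hb
  have hGab := Real.Gamma_pos_of_pos (by linarith : 0 < a + b)
  have hθa := Real.rpow_pos_of_pos hθ a
  have hθb := Real.rpow_pos_of_pos hθ b
  have hstep : ∫ s in Ioo (0:ℝ) x, gpdf θ b s * gpdf θ a (x - s)
      = ∫ s in Ioo (0:ℝ) x, s ^ (b - 1) * (x - s) ^ (a - 1)
          * (Real.exp (-x / θ) / (Real.Gamma a * Real.Gamma b * (θ ^ a * θ ^ b))) := by
    refine setIntegral_congr_fun measurableSet_Ioo fun s hs => ?_
    have h1 : 0 < s := hs.1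
    have h2 : 0 < x - s := by linarith [hs.2]
    rw [gpdf, gpdf, if_pos h1, if_pos h2]
    have he : Real.exp (-s / θ) * Real.exp (-(x - s) / θ) = Real.exp (-x / θ) := by
      rw [← Real.exp_add]
      congr 1
      field_simp
      ring
    rw [← he]
    ring
  rw [hstep, MeasureTheory.integral_mul_const, beta_real ha hb hx, gpdf, if_pos hx]
  rw [Real.rpow_add hθ]
  field_simp

lemma conv_step {θ a b : ℝ} (hθ : 0 < θ) (ha : 0 < a) (hb : 0 < b) {u : ℝ} (hu : 0 ≤ u) :
    ∫ s in Ioc (0:ℝ) u, (∫ y in Ioc (0:ℝ) (u - s), gpdf θ a y) * gpdf θ b s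
      = ∫ x in Ioc (0:ℝ) u, gpdf θ (a + b) x := by
  set F : ℝ → ℝ → ℝ := fun s x =>
    (Ioc (0:ℝ) u).indicator (gpdf θ b) s
      * (Ioc s u).indicator (fun x => gpdf θ a (x - s)) x with hFdef
  set G : ℝ → ℝ → ℝ := fun s y =>
    (Ioc (0:ℝ) u).indicator (gpdf θ b) s
      * (Ioc (0:ℝ) (u - s)).indicator (gpdf θ a) y with hGdef
  -- inner integral in x
  have htrans : ∀ s : ℝ, (∫ x in Ioc s u, gpdf θ a (x - s))
      = ∫ y in Ioc (0:ℝ) (u - s), gpdf θ a y := by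
    intro s
    rcases le_or_gt s u with h | h
    · rw [← intervalIntegral.integral_of_le h,
        ← intervalIntegral.integral_of_le (by linarith : (0:ℝ) ≤ u - s),
        intervalIntegral.integral_comp_sub_right (fun y => gpdf θ a y) s, sub_self]
    · rw [Set.Ioc_eq_empty (not_lt.2 h.le), Set.Ioc_eq_empty (not_lt.2 (by linarith))]
      simp
  have hinner : ∀ s : ℝ, (∫ x, F s x)
      = (Ioc (0:ℝ) u).indicator (gpdf θ b) s * ∫ y in Ioc (0:ℝ) (u - s), gpdf θ a y := by
    intro s
    rw [hFdef]
    simp only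
    rw [MeasureTheory.integral_const_mul, MeasureTheory.integral_indicator measurableSet_Ioc,
      htrans s]
  have hlhs : (∫ s, ∫ x, F s x)
      = ∫ s in Ioc (0:ℝ) u, (∫ y in Ioc (0:ℝ) (u - s), gpdf θ a y) * gpdf θ b s := by
    have e1 : ∀ s : ℝ, (∫ x, F s x)
        = (Ioc (0:ℝ) u).indicator
            (fun s => (∫ y in Ioc (0:ℝ) (u - s), gpdf θ a y) * gpdf θ b s) s := by
      intro s
      rw [hinner s]
      by_cases hs : s ∈ Ioc (0:ℝ) u
      · rw [Set.indicator_of_mem hs, Set.indicator_of_mem hs, mul_comm]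
      · rw [Set.indicator_of_notMem hs, Set.indicator_of_notMem hs, zero_mul]
    rw [MeasureTheory.integral_congr_ae (Filter.Eventually.of_forall e1),
      MeasureTheory.integral_indicator measurableSet_Ioc]
  -- measurability and integrability
  have m1 : Measurable fun z : ℝ × ℝ => (Ioc (0:ℝ) u).indicator (gpdf θ b) z.1 :=
    ((measurable_gpdf θ b).indicator measurableSet_Ioc).comp measurable_fst
  have m2 : Measurable fun z : ℝ × ℝ => (Ioc (0:ℝ) (u - z.1)).indicator (gpdf θ a) z.2 := by
    have hA : MeasurableSet {z : ℝ × ℝ | 0 < z.2 ∧ z.2 + z.1 ≤ u} :=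
      (measurableSet_lt measurable_const measurable_snd).inter
        (measurableSet_le (measurable_snd.add measurable_fst) measurable_const)
    have e : (fun z : ℝ × ℝ => (Ioc (0:ℝ) (u - z.1)).indicator (gpdf θ a) z.2)
        = {z : ℝ × ℝ | 0 < z.2 ∧ z.2 + z.1 ≤ u}.indicator (fun z => gpdf θ a z.2) := by
      funext z
      by_cases h : 0 < z.2 ∧ z.2 + z.1 ≤ u
      · have hm1 : z ∈ {z : ℝ × ℝ | 0 < z.2 ∧ z.2 + z.1 ≤ u} := h
        have hm2 : z.2 ∈ Ioc (0:ℝ) (u - z.1) := ⟨h.1, by linarith [h.2]⟩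
        rw [Set.indicator_of_mem hm2, Set.indicator_of_mem hm1]
      · have hm1 : z ∉ {z : ℝ × ℝ | 0 < z.2 ∧ z.2 + z.1 ≤ u} := h
        have hm2 : z.2 ∉ Ioc (0:ℝ) (u - z.1) := by
          intro hmem; exact h ⟨hmem.1, by linarith [hmem.2]⟩
        rw [Set.indicator_of_notMem hm2, Set.indicator_of_notMem hm1]
    rw [e]
    exact ((measurable_gpdf θ a).comp measurable_snd).indicator hA
  have hintG : Integrable (Function.uncurry G) (volume.prod volume) := by
    have hbound : Integrable (fun z : ℝ × ℝ =>
        (Ioc (0:ℝ) u).indicator (gpdf θ b) z.1 * (Ioc (0:ℝ) u).indicator (gpdf θ a) z.2)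
        (volume.prod volume) :=
      Integrable.mul_prod
        ((integrable_indicator_iff measurableSet_Ioc).2 (integrableOn_gpdf hθ hb u))
        ((integrable_indicator_iff measurableSet_Ioc).2 (integrableOn_gpdf hθ ha u))
    refine hbound.mono (m1.mul m2).aestronglyMeasurable ?_
    refine Filter.Eventually.of_forall fun z => ?_
    simp only [Function.uncurry, hGdef]
    have hnn : ∀ (c : ℝ) (S : Set ℝ) (f : ℝ → ℝ), (∀ w, 0 ≤ f w) → 0 ≤ S.indicator f c := by
      intro c S f hf
      exact Set.indicator_nonneg (fun w _ => hf w) c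
    rw [Real.norm_eq_abs, Real.norm_eq_abs,
      abs_of_nonneg (mul_nonneg (hnn _ _ _ (gpdf_nonneg hθ hb)) (hnn _ _ _ (gpdf_nonneg hθ ha))),
      abs_of_nonneg (mul_nonneg (hnn _ _ _ (gpdf_nonneg hθ hb)) (hnn _ _ _ (gpdf_nonneg hθ ha)))]
    by_cases hz : z.1 ∈ Ioc (0:ℝ) u
    · refine mul_le_mul_of_nonneg_left ?_ (hnn _ _ _ (gpdf_nonneg hθ hb))
      refine Set.indicator_le_indicator_of_subset ?_ (fun w => gpdf_nonneg hθ ha w) _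
      exact Set.Ioc_subset_Ioc le_rfl (by linarith [hz.1])
    · rw [Set.indicator_of_notMem hz, zero_mul, zero_mul]
  have hintF : Integrable (Function.uncurry F) (volume.prod volume) := by
    have hmp := measurePreserving_prod_neg_add (volume : Measure ℝ) (volume : Measure ℝ)
    have hcomp : Integrable ((Function.uncurry G) ∘ (fun z : ℝ × ℝ => (z.1, -z.1 + z.2)))
        (volume.prod volume) :=
      (hmp.integrable_comp (m1.mul m2).aestronglyMeasurable).2 hintG
    have e : Function.uncurry F
        = (Function.uncurry G) ∘ (fun z : ℝ × ℝ => (z.1, -z.1 + z.2)) := by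
      funext z
      show F z.1 z.2 = G z.1 (-z.1 + z.2)
      simp only [hFdef, hGdef]
      congr 1
      by_cases h : z.2 ∈ Ioc z.1 u
      · have hm : -z.1 + z.2 ∈ Ioc (0:ℝ) (u - z.1) := ⟨by linarith [h.1], by linarith [h.2]⟩
        rw [Set.indicator_of_mem h, Set.indicator_of_mem hm]
        ring_nf
      · have hm : -z.1 + z.2 ∉ Ioc (0:ℝ) (u - z.1) := by
          intro hmem; exact h ⟨by linarith [hmem.1], by linarith [hmem.2]⟩
        rw [Set.indicator_of_notMem h, Set.indicator_of_notMem hm]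
    rw [e]
    exact hcomp
  -- swap
  have hswap := MeasureTheory.integral_integral_swap (f := F) hintF
  -- column integral
  have hcol : ∀ x : ℝ, (∫ s, F s x)
      = (Ioc (0:ℝ) u).indicator
          (fun x => ∫ s in Ioo (0:ℝ) x, gpdf θ b s * gpdf θ a (x - s)) x := by
    intro x
    by_cases hx : x ∈ Ioc (0:ℝ) u
    · rw [Set.indicator_of_mem hx]
      have e : ∀ s : ℝ, F s x
          = (Ioo (0:ℝ) x).indicator (fun s => gpdf θ b s * gpdf θ a (x - s)) s := by
        intro s
        by_cases hs : s ∈ Ioo (0:ℝ) x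
        · have hm1 : s ∈ Ioc (0:ℝ) u := ⟨hs.1, by linarith [hs.2, hx.2]⟩
          have hm2 : x ∈ Ioc s u := ⟨hs.2, hx.2⟩
          rw [Set.indicator_of_mem hs, hFdef]
          simp only
          rw [Set.indicator_of_mem hm1, Set.indicator_of_mem hm2]
        · rw [Set.indicator_of_notMem hs, hFdef]
          simp only
          by_cases h0 : 0 < s
          · have hm : x ∉ Ioc s u := by
              intro hmem; exact hs ⟨h0, hmem.1⟩
            rw [Set.indicator_of_notMem hm, mul_zero]
          · have hm : s ∉ Ioc (0:ℝ) u := by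
              intro hmem; exact h0 hmem.1
            rw [Set.indicator_of_notMem hm, zero_mul]
      rw [MeasureTheory.integral_congr_ae (Filter.Eventually.of_forall e),
        MeasureTheory.integral_indicator measurableSet_Ioo]
    · rw [Set.indicator_of_notMem hx]
      have e : ∀ s : ℝ, F s x = 0 := by
        intro s
        rw [hFdef]
        simp only
        by_cases hs : s ∈ Ioc (0:ℝ) u
        · have hm : x ∉ Ioc s u := by
            intro hmem; exact hx ⟨lt_trans hs.1 hmem.1, hmem.2⟩
          rw [Set.indicator_of_notMem hm, mul_zero]
        · rw [Set.indicator_of_notMem hs, zero_mul]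
      rw [MeasureTheory.integral_congr_ae (Filter.Eventually.of_forall e),
        MeasureTheory.integral_zero]
  calc
    ∫ s in Ioc (0:ℝ) u, (∫ y in Ioc (0:ℝ) (u - s), gpdf θ a y) * gpdf θ b s
        = ∫ s, ∫ x, F s x := hlhs.symm
    _ = ∫ x, ∫ s, F s x := hswap
    _ = ∫ x, (Ioc (0:ℝ) u).indicator
          (fun x => ∫ s in Ioo (0:ℝ) x, gpdf θ b s * gpdf θ a (x - s)) x :=
        MeasureTheory.integral_congr_ae (Filter.Eventually.of_forall hcol)
    _ = ∫ x in Ioc (0:ℝ) u, ∫ s in Ioo (0:ℝ) x, gpdf θ b s * gpdf θ a (x - s) :=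
        MeasureTheory.integral_indicator measurableSet_Ioc
    _ = ∫ x in Ioc (0:ℝ) u, gpdf θ (a + b) x := by
        refine setIntegral_congr_fun measurableSet_Ioc fun x hx => ?_
        exact gpdf_conv hθ ha hb hx.1

lemma Fstar_eq {κ θ : ℝ} (hκ : 0 < κ) (hθ : 0 < θ) {ρ : ℝ → ℝ} (hρ : ρ = gpdf θ κ) :
    ∀ k : ℕ, ∀ u : ℝ, 0 ≤ u →
      Fstar ρ (k + 1) u = ∫ x in Ioc (0:ℝ) u, gpdf θ (((k:ℝ) + 1) * κ) x := by
  intro k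
  induction k with
  | zero =>
    intro u hu
    show (∫ s in (0:ℝ)..u, Fstar ρ 0 (u - s) * ρ s) = _
    rw [intervalIntegral.integral_of_le hu]
    refine setIntegral_congr_fun measurableSet_Ioc fun s _ => ?_
    show 1 * ρ s = _
    rw [one_mul, hρ]
    norm_num
  | succ k ih =>
    intro u hu
    show (∫ s in (0:ℝ)..u, Fstar ρ (k + 1) (u - s) * ρ s) = _
    rw [intervalIntegral.integral_of_le hu]
    have e1 : ∀ s ∈ Ioc (0:ℝ) u, Fstar ρ (k + 1) (u - s) * ρ s
        = (∫ y in Ioc (0:ℝ) (u - s), gpdf θ (((k:ℝ) + 1) * κ) y) * gpdf θ κ s := by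
      intro s hs
      rw [ih (u - s) (by linarith [hs.2]), hρ]
    rw [setIntegral_congr_fun measurableSet_Ioc e1,
      conv_step hθ (by positivity : (0:ℝ) < ((k:ℝ) + 1) * κ) hκ hu]
    congr 1
    push_cast
    ring

lemma lowerGamma_nonneg (a x : ℝ) : 0 ≤ lowerGamma a x := by
  refine setIntegral_nonneg measurableSet_Ioc fun s hs => ?_
  have := hs.1
  positivity

lemma lowerGamma_le {a x : ℝ} (ha : 0 < a) (hx : 0 ≤ x) : lowerGamma a x ≤ x ^ a / a := by
  have h1 : IntegrableOn (fun s : ℝ => s ^ (a - 1)) (Ioc 0 x) := by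
    have := intervalIntegral.intervalIntegrable_rpow' (a := 0) (b := x)
      (r := a - 1) (by linarith)
    rwa [intervalIntegrable_iff_integrableOn_Ioc_of_le hx] at this
  have h2 : IntegrableOn (fun s : ℝ => s ^ (a - 1) * Real.exp (-s)) (Ioc 0 x) := by
    refine h1.mono' ?_ ?_
    · refine ContinuousOn.aestronglyMeasurable ?_ measurableSet_Ioc
      intro s hs
      exact ((Real.continuousAt_rpow_const s (a-1) (Or.inl hs.1.ne')).continuousWithinAt).mul
        ((Real.continuous_exp.comp continuous_neg).continuousWithinAt)
    · filter_upwards [ae_restrict_mem measurableSet_Ioc] with s hs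
      rw [Real.norm_eq_abs,
        abs_of_nonneg (mul_nonneg (Real.rpow_nonneg hs.1.le _) (Real.exp_pos _).le)]
      have : Real.exp (-s) ≤ 1 := Real.exp_le_one_iff.2 (by linarith [hs.1])
      nlinarith [Real.rpow_nonneg hs.1.le (a-1), Real.exp_pos (-s)]
  have hle : lowerGamma a x ≤ ∫ s in Ioc (0:ℝ) x, s ^ (a - 1) := by
    refine setIntegral_mono_on h2 h1 measurableSet_Ioc fun s hs => ?_
    have : Real.exp (-s) ≤ 1 := Real.exp_le_one_iff.2 (by linarith [hs.1])
    nlinarith [Real.rpow_nonneg hs.1.le (a-1), Real.exp_pos (-s)]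
  refine hle.trans ?_
  rw [← intervalIntegral.integral_of_le hx,
    integral_rpow (Or.inl (by linarith : (-1:ℝ) < a - 1))]
  rw [sub_add_cancel, Real.zero_rpow ha.ne', sub_zero]

lemma summable_aux {κ : ℝ} (hκ : 0 < κ) {r : ℝ} (hr : 0 ≤ r) :
    Summable fun k : ℕ => r ^ k / Real.Gamma ((k:ℝ) * κ + 1) := by
  set k₀ : ℕ := ⌈κ⁻¹⌉₊ + 1 with hk₀
  rw [← summable_nat_add_iff k₀]
  set S : ℝ := (max 1 r) ^ (κ⁻¹) with hS
  have hS1 : 1 ≤ S := Real.one_le_rpow (le_max_left 1 r) (inv_nonneg.2 hκ.le)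
  have hS0 : 0 < S := by linarith
  set K : ℝ := Real.exp (2 * S) with hKdef
  have hK : ∀ n : ℕ, (2*S)^n / (n.factorial : ℝ) ≤ K := fun n =>
    Real.pow_div_factorial_le_exp (2*S) (by linarith) n
  set q : ℝ := (1/2 : ℝ) ^ κ with hq
  have hq0 : 0 < q := Real.rpow_pos_of_pos (by norm_num) _
  have hq1 : q < 1 := Real.rpow_lt_one (by norm_num) (by norm_num) hκ
  have key : ∀ k : ℕ, r ^ (k + k₀) / Real.Gamma (((k + k₀ : ℕ):ℝ) * κ + 1)
      ≤ (2 * S * K * q ^ k₀) * q ^ k := by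
    intro k
    set m : ℕ := k + k₀ with hm
    have hm1 : 1 ≤ (m:ℝ) * κ := by
      have h1 : κ⁻¹ ≤ (⌈κ⁻¹⌉₊ : ℝ) := Nat.le_ceil _
      have h2 : (k₀ : ℝ) ≤ (m : ℝ) := by
        have : k₀ ≤ m := Nat.le_add_left _ _
        exact_mod_cast this
      have h3 : (κ⁻¹ + 1) ≤ (k₀ : ℝ) := by
        rw [hk₀]; push_cast; linarith
      have := mul_le_mul_of_nonneg_right (h3.trans h2) hκ.le
      rw [add_mul, inv_mul_cancel₀ hκ.ne'] at this
      nlinarith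
    set n : ℕ := ⌊(m:ℝ) * κ⌋₊ with hn
    have hn1 : 1 ≤ n := by
      rw [hn]
      exact Nat.le_floor (by exact_mod_cast hm1)
    have hfl : (n : ℝ) ≤ (m:ℝ) * κ := Nat.floor_le (by positivity)
    have hfu : (m:ℝ) * κ < (n:ℝ) + 1 := Nat.lt_floor_add_one _
    have hGam : (n.factorial : ℝ) ≤ Real.Gamma ((m:ℝ) * κ + 1) := by
      rw [← Real.Gamma_nat_eq_factorial]
      have h2 : ((n:ℝ) + 1) ∈ Ici (2:ℝ) := by
        simp only [mem_Ici]
        have : (1:ℝ) ≤ (n:ℝ) := by exact_mod_cast hn1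
        linarith
      have h2' : ((m:ℝ) * κ + 1) ∈ Ici (2:ℝ) := by
        simp only [mem_Ici]; linarith
      have := (Real.Gamma_strictMonoOn_Ici.monotoneOn) h2 h2' (by linarith)
      simpa using this
    have hGpos : 0 < Real.Gamma ((m:ℝ) * κ + 1) := Real.Gamma_pos_of_pos (by linarith)
    have hnum : r ^ m ≤ S * S ^ n := by
      have h1 : r ^ m ≤ (max 1 r) ^ m :=
        pow_le_pow_left₀ hr (le_max_right 1 r) m
      have h2 : (max 1 r) ^ m = (max 1 r) ^ (m : ℝ) := (Real.rpow_natCast _ m).symm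
      have h3 : (max 1 r) ^ (m:ℝ) ≤ (max 1 r) ^ (((n:ℝ) + 1) * κ⁻¹) := by
        refine Real.rpow_le_rpow_of_exponent_le (le_max_left 1 r) ?_
        have h := mul_le_mul_of_nonneg_right hfu.le (inv_nonneg.2 hκ.le)
        rwa [mul_assoc, mul_inv_cancel₀ hκ.ne', mul_one] at h
      have h4 : (max 1 r) ^ (((n:ℝ) + 1) * κ⁻¹) = S ^ ((n:ℝ) + 1) := by
        rw [hS, ← Real.rpow_mul (le_trans zero_le_one (le_max_left 1 r)),
          mul_comm κ⁻¹ ((n:ℝ) + 1)]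
      have h5 : S ^ ((n:ℝ) + 1) = S * S ^ n := by
        rw [Real.rpow_add hS0, Real.rpow_one, Real.rpow_natCast]
        ring
      calc r ^ m ≤ (max 1 r) ^ m := h1
        _ = (max 1 r) ^ (m:ℝ) := h2
        _ ≤ (max 1 r) ^ (((n:ℝ) + 1) * κ⁻¹) := h3
        _ = S ^ ((n:ℝ) + 1) := h4
        _ = S * S ^ n := h5
    calc r ^ m / Real.Gamma ((m:ℝ) * κ + 1)
        ≤ (S * S ^ n) / (n.factorial : ℝ) := by
          refine div_le_div₀ (by positivity) hnum (by positivity) hGam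
      _ = S * ((2*S)^n / (n.factorial : ℝ)) * (1/2:ℝ)^n := by
          rw [mul_pow, one_div_pow]
          field_simp
      _ ≤ S * K * (1/2:ℝ)^n := by
          refine mul_le_mul_of_nonneg_right ?_ (by positivity)
          exact mul_le_mul_of_nonneg_left (hK n) hS0.le
      _ ≤ S * K * (2 * q ^ m) := by
          refine mul_le_mul_of_nonneg_left ?_ (by positivity)
          have e1 : ((1/2:ℝ)) ^ n = (1/2:ℝ) ^ (n:ℝ) := (Real.rpow_natCast _ n).symm
          have e2 : (1/2:ℝ) ^ (n:ℝ) ≤ (1/2:ℝ) ^ ((m:ℝ)*κ - 1) :=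
            Real.rpow_le_rpow_of_exponent_ge (by norm_num) (by norm_num) (by linarith)
          have e3 : (1/2:ℝ) ^ ((m:ℝ)*κ - 1) = 2 * q ^ m := by
            rw [Real.rpow_sub (by norm_num), Real.rpow_one, hq,
              ← Real.rpow_natCast ((1/2:ℝ)^κ) m, ← Real.rpow_mul (by norm_num),
              mul_comm κ (m:ℝ)]
            ring
          rw [e1]
          linarith [e2, e3]
      _ = (2 * S * K * q ^ k₀) * q ^ k := by
          rw [hm, pow_add]
          ring
  refine Summable.of_nonneg_of_le (fun k => ?_) key ?_
  · exact div_nonneg (by positivity) (Real.Gamma_pos_of_pos (by positivity)).le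
  · exact (summable_geometric_of_lt_one hq0.le hq1).mul_left _

/-- For `Gamma(κ,θ)` lifetimes, the expected population size is
`m(t) = Σ_{k≥0} n₀^k γ(kκ, t/θ)/Γ(kκ)` (the `k = 0` term being `1`), and this series
converges for every `t ≥ 0` and `n₀ ≥ 0`. -/
theorem stmt_10 (κ θ : ℝ) (hκ : 0 < κ) (hθ : 0 < θ)
    (ρ : ℝ → ℝ)
    (hρ : ∀ t : ℝ, ρ t =
      if 0 < t then t ^ (κ - 1) * Real.exp (-t / θ) / (Real.Gamma κ * θ ^ κ) else 0)
    (n₀ : ℝ) (hn₀ : 0 ≤ n₀) (t : ℝ) (ht : 0 ≤ t) :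
    (Summable fun k : ℕ =>
      if k = 0 then (1 : ℝ) else n₀ ^ k * lowerGamma (k * κ) (t / θ) / Real.Gamma (k * κ)) ∧
    (∀ k : ℕ, n₀ ^ k * Fstar ρ k t =
      if k = 0 then (1 : ℝ) else n₀ ^ k * lowerGamma (k * κ) (t / θ) / Real.Gamma (k * κ)) ∧
    (∑' k, n₀ ^ k * Fstar ρ k t) = ∑' k : ℕ,
      if k = 0 then (1 : ℝ) else n₀ ^ k * lowerGamma (k * κ) (t / θ) / Real.Gamma (k * κ) := by
  have hρ' : ρ = gpdf θ κ := by
    funext s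
    rw [hρ s]
    rfl
  have hx0' : 0 ≤ t / θ := div_nonneg ht hθ.le
  have claim2 : ∀ k : ℕ, n₀ ^ k * Fstar ρ k t =
      if k = 0 then (1:ℝ) else n₀ ^ k * lowerGamma (k * κ) (t / θ) / Real.Gamma (k * κ) := by
    intro k
    cases k with
    | zero => simp [Fstar]
    | succ k =>
      rw [if_neg (Nat.succ_ne_zero k)]
      have ha : (0:ℝ) < ((k:ℝ) + 1) * κ := by positivity
      rw [Fstar_eq hκ hθ hρ' k t ht, ← lg_eq hθ ha ht]
      push_cast
      rw [mul_div_assoc]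
  refine ⟨?_, claim2, tsum_congr claim2⟩
  set r : ℝ := n₀ * (t / θ) ^ κ with hr
  have hrnn : 0 ≤ r := by positivity
  refine Summable.of_nonneg_of_le (fun k => ?_) (fun k => ?_) (summable_aux hκ hrnn)
  · split_ifs with h
    · norm_num
    · have hk1 : 1 ≤ k := Nat.one_le_iff_ne_zero.2 h
      have hkR : (1:ℝ) ≤ (k:ℝ) := by exact_mod_cast hk1
      have hk : 0 < (k:ℝ) * κ := by nlinarith
      exact div_nonneg (mul_nonneg (pow_nonneg hn₀ k) (lowerGamma_nonneg _ _))
        (Real.Gamma_pos_of_pos hk).le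
  · split_ifs with h
    · subst h
      simp [Real.Gamma_one]
    · have hk1 : 1 ≤ k := Nat.one_le_iff_ne_zero.2 h
      have hkR : (1:ℝ) ≤ (k:ℝ) := by exact_mod_cast hk1
      have hk : 0 < (k:ℝ) * κ := by nlinarith
      have hG : 0 < Real.Gamma ((k:ℝ) * κ) := Real.Gamma_pos_of_pos hk
      have hlg : lowerGamma ((k:ℝ) * κ) (t / θ) ≤ (t / θ) ^ ((k:ℝ) * κ) / ((k:ℝ) * κ) :=
        lowerGamma_le hk hx0'
      have hGadd : Real.Gamma ((k:ℝ) * κ + 1) = ((k:ℝ) * κ) * Real.Gamma ((k:ℝ) * κ) :=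
        Real.Gamma_add_one hk.ne'
      have hxpow : (t / θ) ^ ((k:ℝ) * κ) = ((t / θ) ^ κ) ^ k := by
        rw [mul_comm, Real.rpow_mul hx0', Real.rpow_natCast]
      have hrk : r ^ k = n₀ ^ k * (t / θ) ^ ((k:ℝ) * κ) := by
        rw [hr, mul_pow, hxpow]
      calc n₀ ^ k * lowerGamma ((k:ℝ) * κ) (t / θ) / Real.Gamma ((k:ℝ) * κ)
          ≤ n₀ ^ k * ((t / θ) ^ ((k:ℝ) * κ) / ((k:ℝ) * κ)) / Real.Gamma ((k:ℝ) * κ) := by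
            gcongr
      _ = r ^ k / Real.Gamma ((k:ℝ) * κ + 1) := by
            rw [hGadd, hrk]
            field_simp
end
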